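/- arXiv:2012.01374 — 2 statements merged into one kernel-verified Lean document; each statement's English description precedes it below -/
import Mathlib

section
/- Let G be a finite non-abelian group, H a subgroup of G with H ≠ Z(H,G), and g ∈ K(H,G) with g ≠ 1 and g² = 1. If x ∈ H \ Z(H,G) is conjugate in G to xg, then the degree of x in Δ_{H,G}^g equals |G| - |Z(H,G)| - |C_G(x)| - 1. -/
open SimpleGraph

/-- `Z(H,G)`: the set of elements of `H` commuting with every element of `G`. -/
def relCenter (G : Type*) [Group G] (H : Subgroup G) : Set G :=
  {x : G | x ∈ H ∧ ∀ y : G, x * y = y * x}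

/-- The commutator `[x,y] = x⁻¹y⁻¹xy`. -/
def comm' {G : Type*} [Group G] (x y : G) : G :=
  x⁻¹ * y⁻¹ * x * y

lemma comm'_swap {G : Type*} [Group G] (x y : G) :
    comm' y x = (comm' x y)⁻¹ := by
  simp only [comm', mul_inv_rev, inv_inv, mul_assoc]

/-- `K(H,G) = {[x,y] : x ∈ H, y ∈ G}`. -/
def relComm (G : Type*) [Group G] (H : Subgroup G) : Set G :=
  {w : G | ∃ x ∈ H, ∃ y : G, comm' x y = w}

/-- The graph `Δ_{H,G}^g`: vertices are the elements of `G \ Z(H,G)`, and two distinct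
vertices `x`, `y` are adjacent iff (`x ∈ H` or `y ∈ H`) and `[x,y] ≠ g, g⁻¹`. -/
def gnc (G : Type*) [Group G] (H : Subgroup G) (g : G) :
    SimpleGraph (((relCenter G H)ᶜ : Set G)) where
  Adj x y := x ≠ y ∧ ((x : G) ∈ H ∨ (y : G) ∈ H) ∧
    comm' (x : G) (y : G) ≠ g ∧ comm' (x : G) (y : G) ≠ g⁻¹
  symm := by
    constructor
    rintro x y ⟨hxy, hH, h1, h2⟩
    refine ⟨fun h => hxy h.symm, hH.symm, ?_, ?_⟩
    · rw [comm'_swap, ne_eq, inv_eq_iff_eq_inv]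
      exact h2
    · rw [comm'_swap, ne_eq, inv_eq_iff_eq_inv, inv_inv]
      exact h1
  loopless := by
    constructor
    rintro x ⟨h, -⟩
    exact h rfl

lemma comm'_eq_iff {G : Type*} [Group G] (x y g : G) :
    comm' x y = g ↔ y⁻¹ * x * y = x * g := by
  have h : comm' x y = x⁻¹ * (y⁻¹ * x * y) := by
    simp [comm', mul_assoc]
  rw [h, inv_mul_eq_iff_eq_mul]

lemma comm'_center {G : Type*} [Group G] {H : Subgroup G} (x : G) {y : G}
    (hy : y ∈ relCenter G H) : comm' x y = 1 := by
  have h : x * y = y * x := (hy.2 x).symm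
  simp [comm', mul_assoc, h]

open scoped Classical in
/-- degree of a vertex `x ∈ H \ Z(H,G)` when `g ≠ 1`, `g² = 1` and
`x` is conjugate to `xg`. -/
theorem stmt2 {G : Type*} [Group G] [Fintype G]
    (hna : ∃ x y : G, x * y ≠ y * x)
    (H : Subgroup G) (hH : (H : Set G) ≠ relCenter G H)
    (g : G) (hgK : g ∈ relComm G H) (hg1 : g ≠ 1) (hg2 : g ^ 2 = 1)
    (x : G) (hxH : x ∈ H) (hx : x ∉ relCenter G H)
    (hconj : ∃ z : G, z⁻¹ * x * z = x * g) :
    (gnc G H g).degree ⟨x, hx⟩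
      = Nat.card G - Nat.card (relCenter G H)
          - Nat.card (Subgroup.centralizer ({x} : Set G)) - 1 := by
  classical
  obtain ⟨z, hz⟩ := hconj
  have hginv : g⁻¹ = g := by
    rw [pow_two] at hg2
    exact inv_eq_of_mul_eq_one_left hg2
  set P : G → Prop := fun y => y ∉ relCenter G H ∧ y ≠ x ∧ comm' x y ≠ g with hP
  -- Step 1: degree equals number of y satisfying P
  have h1 : (gnc G H g).degree ⟨x, hx⟩ = Fintype.card {y : G // P y} := by
    rw [← SimpleGraph.card_neighborSet_eq_degree]
    refine Fintype.card_congr ⟨fun y => ⟨y.1.1, y.1.2, fun h => y.2.1 (Subtype.ext h.symm),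
      y.2.2.2.1⟩, fun y => ⟨⟨y.1, y.2.1⟩, fun h => y.2.2.1 (congrArg Subtype.val h).symm,
      Or.inl hxH, y.2.2.2, by rw [hginv]; exact y.2.2.2⟩, fun y => rfl, fun y => rfl⟩
  -- Finsets
  set A : Finset G := Finset.univ.filter (· ∈ relCenter G H) with hA
  set T : Finset G := Finset.univ.filter (fun y => comm' x y = g) with hT
  set C : Finset G := Finset.univ.filter (· ∈ Subgroup.centralizer ({x} : Set G)) with hC
  -- cards of the pieces
  have hcardA : Nat.card (relCenter G H) = A.card := by
    rw [Nat.card_eq_fintype_card, hA, ← Fintype.card_subtype]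
  have hcardC : Nat.card (Subgroup.centralizer ({x} : Set G)) = C.card := by
    rw [Nat.card_eq_fintype_card, hC, ← Fintype.card_subtype]
  have hcardG : Nat.card G = (Finset.univ : Finset G).card := by
    rw [Nat.card_eq_fintype_card, Finset.card_univ]
  -- |T| = |C| via y ↦ y * z⁻¹
  have hTC : T.card = C.card := by
    refine Finset.card_bij' (fun y _ => y * z⁻¹) (fun c _ => c * z) ?_ ?_ ?_ ?_
    · intro y hy
      rw [hT, Finset.mem_filter] at hy
      rw [hC, Finset.mem_filter]
      refine ⟨Finset.mem_univ _, ?_⟩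
      rw [Subgroup.mem_centralizer_singleton_iff]
      have key : y⁻¹ * x * y = z⁻¹ * x * z := by
        rw [(comm'_eq_iff x y g).1 hy.2, hz]
      calc y * z⁻¹ * x = y * (z⁻¹ * x * z) * z⁻¹ := by group
        _ = y * (y⁻¹ * x * y) * z⁻¹ := by rw [key]
        _ = x * (y * z⁻¹) := by group
    · intro c hc
      rw [hC, Finset.mem_filter, Subgroup.mem_centralizer_singleton_iff] at hc
      rw [hT, Finset.mem_filter]
      refine ⟨Finset.mem_univ _, ?_⟩
      rw [comm'_eq_iff, ← hz]
      have hcx : c⁻¹ * x * c = x := by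
        rw [mul_assoc, ← hc.2, inv_mul_cancel_left]
      calc (c * z)⁻¹ * x * (c * z) = z⁻¹ * (c⁻¹ * x * c) * z := by group
        _ = z⁻¹ * x * z := by rw [hcx]
    · intro y _; simp [mul_assoc]
    · intro c _; simp [mul_assoc]
  -- complement of P
  have hcompl : Finset.univ.filter (fun y => ¬ P y) = (A ∪ {x}) ∪ T := by
    ext y
    simp only [hP, Finset.mem_filter, Finset.mem_univ, true_and, Finset.mem_union,
      Finset.mem_singleton, hA, hT]
    constructor
    · intro h
      by_cases h1 : y ∈ relCenter G H
      · exact Or.inl (Or.inl h1)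
      by_cases h2 : y = x
      · exact Or.inl (Or.inr h2)
      push_neg at h
      exact Or.inr (h h1 h2)
    · rintro (h | h) hcon
      · rcases h with h | h
        · exact hcon.1 h
        · exact hcon.2.1 h
      · exact hcon.2.2 h
  have hd1 : Disjoint A ({x} : Finset G) := by
    rw [Finset.disjoint_singleton_right, hA, Finset.mem_filter]
    exact fun h => hx h.2
  have hd2 : Disjoint (A ∪ {x}) T := by
    rw [Finset.disjoint_left]
    intro y hy hyT
    rw [hT, Finset.mem_filter] at hyT
    rcases Finset.mem_union.1 hy with h | h
    · rw [hA, Finset.mem_filter] at h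
      exact hg1 (hyT.2.symm.trans (comm'_center x h.2))
    · rw [Finset.mem_singleton] at h
      subst h
      apply hg1
      rw [← hyT.2]
      simp [comm', mul_assoc]
  have hsplit : (Finset.univ.filter P).card + ((A ∪ {x}) ∪ T).card
      = (Finset.univ : Finset G).card := by
    rw [← hcompl]
    exact Finset.card_filter_add_card_filter_not P
  have hucard : ((A ∪ {x}) ∪ T).card = A.card + 1 + T.card := by
    rw [Finset.card_union_of_disjoint hd2, Finset.card_union_of_disjoint hd1,
      Finset.card_singleton]
  have h2 : Fintype.card {y : G // P y} = (Finset.univ.filter P).card :=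
    Fintype.card_subtype _
  rw [h1, h2, hcardG, hcardA, hcardC, ← hTC]
  omega
end

section
/- Let G be a finite non-abelian group with |G| ≤ 12, H a subgroup of G with H ≠ Z(H,G), and take g = 1. Then the graph Δ_{H,G}^1 is a tree if and only if |H| = 2 and G is isomorphic to the dihedral group D_6 of order 6 or to the dihedral group D_10 of order 10. -/
open SimpleGraph

lemma comm'_eq_one_iff {G : Type*} [Group G] (x y : G) :
    comm' x y = 1 ↔ x * y = y * x := by
  rw [comm']
  constructor
  · intro h
    have := congrArg (fun z => y * x * z) h
    simp only [mul_assoc] at this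
    simpa [← mul_assoc] using this
  · intro h
    rw [mul_assoc, mul_assoc, h]
    simp

lemma no_triangle {V : Type*} {G : SimpleGraph V} (hac : G.IsAcyclic)
    {x y z : V} (hxy : G.Adj x y) (hxz : G.Adj x z) (hzy : G.Adj z y) : False := by
  rw [isAcyclic_iff_path_unique] at hac
  have hp : (Walk.cons hxy Walk.nil).IsPath := by simp [hxy.ne]
  have hq : (Walk.cons hxz (Walk.cons hzy Walk.nil)).IsPath := by
    simp [Walk.isPath_def, hxz.ne, hzy.ne, hxy.ne]
  have := hac ⟨_, hp⟩ ⟨_, hq⟩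
  have h2 := congrArg (fun p : G.Path x y => (p : G.Walk x y).length) this
  simp at h2

lemma no_square {V : Type*} {G : SimpleGraph V} (hac : G.IsAcyclic)
    {x x' y z : V} (hyz : y ≠ z) (hxx' : x ≠ x')
    (hxy : G.Adj x y) (hyx' : G.Adj y x') (hxz : G.Adj x z) (hzx' : G.Adj z x') : False := by
  rw [isAcyclic_iff_path_unique] at hac
  have hp : (Walk.cons hxy (Walk.cons hyx' Walk.nil)).IsPath := by
    simp [Walk.isPath_def, hxy.ne, hyx'.ne, hxx']
  have hq : (Walk.cons hxz (Walk.cons hzx' Walk.nil)).IsPath := by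
    simp [Walk.isPath_def, hxz.ne, hzx'.ne, hxx']
  have := hac ⟨_, hp⟩ ⟨_, hq⟩
  have h2 := congrArg (fun p : G.Path x x' => (p : G.Walk x x').support) this
  simp at h2
  exact hyz h2

lemma star_isTree {V : Type*} {G : SimpleGraph V} (a : V)
    (h1 : ∀ x y, G.Adj x y → x = a ∨ y = a)
    (h2 : ∀ v, v ≠ a → G.Adj a v) : G.IsTree := by
  refine ⟨?_, ?_⟩
  · rw [connected_iff]
    refine ⟨?_, ⟨a⟩⟩
    intro u v
    have key : ∀ w, G.Reachable a w := by
      intro w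
      by_cases hw : w = a
      · subst hw; rfl
      · exact (h2 w hw).reachable
    exact (key u).symm.trans (key v)
  · intro v c hc
    cases c with
    | nil => exact hc.ne_nil rfl
    | @cons _ v1 _ had1 q =>
      cases q with
      | nil => exact had1.ne rfl
      | @cons _ v2 _ had2 q2 =>
        cases q2 with
        | nil =>
          have := hc.three_le_length
          simp at this
        | @cons _ v3 _ had3 p3 =>
          have hsup := hc.support_nodup
          simp only [Walk.support_cons, List.tail_cons, List.nodup_cons] at hsup
          obtain ⟨hv1, hv2, -⟩ := hsup
          by_cases h : v1 = a
          · subst h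
            have hv2a : v2 ≠ v1 := fun hh => hv1 (by simp [hh])
            have hv3a : v3 = v1 := (h1 _ _ had3).resolve_left hv2a
            exact hv1 (List.mem_cons_of_mem _ (hv3a ▸ p3.start_mem_support))
          · have hva : v = a := (h1 _ _ had1).resolve_right h
            have hv2a : v2 = a := (h1 _ _ had2).resolve_left h
            have hv2v : v2 = v := by rw [hv2a, hva]
            exact hv2 (hv2v ▸ p3.end_mem_support)

lemma exists_not_commute {G : Type*} [Group G] {x y : G} (h : x * y ≠ y * x) :
    ∃ z, x * z ≠ z * x ∧ y * z ≠ z * y := by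
  by_contra hc
  push_neg at hc
  have h1 : x * (y * x) ≠ (y * x) * x := by
    intro he
    apply h
    rw [← mul_assoc] at he
    exact mul_right_cancel he
  have h2 := hc (y * x) h1
  apply h
  have h3 : y * (y * x) = y * (x * y) := by rw [h2, mul_assoc]
  exact (mul_left_cancel h3).symm

lemma exists_not_commute₂ {G : Type*} [Group G] {a b : G}
    (ha : ∃ u, a * u ≠ u * a) (hb : ∃ v, b * v ≠ v * b) :
    ∃ z, a * z ≠ z * a ∧ b * z ≠ z * b := by
  obtain ⟨u, hu⟩ := ha
  obtain ⟨v, hv⟩ := hb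
  by_cases h1 : b * u = u * b
  · by_cases h2 : a * v = v * a
    · refine ⟨u * v, ?_, ?_⟩
      · intro he
        apply hu
        have : (a * u) * v = (u * a) * v := by
          calc (a * u) * v = a * (u * v) := by rw [mul_assoc]
          _ = (u * v) * a := he
          _ = u * (v * a) := by rw [mul_assoc]
          _ = u * (a * v) := by rw [h2]
          _ = (u * a) * v := by rw [mul_assoc]
        exact mul_right_cancel this
      · intro he
        apply hv
        have : u * (b * v) = u * (v * b) := by
          calc u * (b * v) = (u * b) * v := by rw [mul_assoc]
          _ = (b * u) * v := by rw [h1]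
          _ = b * (u * v) := by rw [mul_assoc]
          _ = (u * v) * b := he
          _ = u * (v * b) := by rw [mul_assoc]
        exact mul_left_cancel this
    · exact ⟨v, h2, hv⟩
  · exact ⟨u, hu, h1⟩

lemma main_iso {G : Type*} [Group G] [Fintype G] (p : ℕ) [hp : Fact p.Prime] (hp2 : p ≠ 2)
    (hcard : Fintype.card G = 2 * p) (a : G) (ha1 : a ≠ 1) (haa : a * a = 1)
    (hCa : ∀ x : G, x * a = a * x → x = 1 ∨ x = a) :
    Nonempty (G ≃* DihedralGroup p) := by
  haveI : NeZero p := ⟨hp.out.ne_zero⟩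
  obtain ⟨b, hbord⟩ := exists_prime_orderOf_dvd_card p (by rw [hcard]; exact dvd_mul_left p 2)
  have hb1 : b ≠ 1 := by
    intro h; rw [h, orderOf_one] at hbord; exact hp.out.one_lt.ne' hbord.symm
  have hba : b * a ≠ a * b := by
    intro h
    rcases hCa b h with h1 | h2
    · exact hb1 h1
    · rw [h2] at hbord
      have h3 : orderOf a ∣ 2 := orderOf_dvd_of_pow_eq_one (by rw [pow_two]; exact haa)
      rw [hbord] at h3
      exact hp2 ((Nat.prime_dvd_prime_iff_eq hp.out Nat.prime_two).mp h3)
  have hainv : a⁻¹ = a := inv_eq_of_mul_eq_one_left haa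
  set N := Subgroup.zpowers b with hN
  have hNcard : Nat.card N = p := by rw [Nat.card_zpowers, hbord]
  have haN : a ∉ N := by
    intro h
    obtain ⟨k, hk⟩ := Subgroup.mem_zpowers_iff.mp h
    apply hba
    rw [← hk, ← zpow_one_add, ← zpow_add_one]
    ring_nf
  have hidx : N.index = 2 := by
    have h := Subgroup.card_mul_index N
    rw [hNcard, Nat.card_eq_fintype_card, hcard, mul_comm 2 p] at h
    exact Nat.eq_of_mul_eq_mul_left hp.out.pos h
  have hbN : b ∈ N := Subgroup.mem_zpowers b
  have hbaN : b * a⁻¹ ∉ N := by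
    rw [Subgroup.mul_mem_iff_of_index_two hidx]
    simp [hbN, hainv, haN]
  have hcN : a * b * a⁻¹ ∈ N := by
    rw [mul_assoc, Subgroup.mul_mem_iff_of_index_two hidx]
    simp [haN, hbaN]
  obtain ⟨k, hk⟩ := Subgroup.mem_zpowers_iff.mp hcN
  have h1 : a * b ^ k * a⁻¹ = b ^ (k * k) :=
    calc a * b ^ k * a⁻¹ = (a * b * a⁻¹) ^ k := conj_zpow.symm
    _ = (b ^ k) ^ k := by rw [hk]
    _ = b ^ (k * k) := by rw [← zpow_mul]
  have h2 : a * b ^ k * a⁻¹ = b := by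
    rw [hk, hainv]
    calc a * (a * b * a) * a = (a * a) * b * (a * a) := by group
    _ = b := by rw [haa]; group
  have hkk : b ^ (k * k) = b ^ (1 : ℤ) := by rw [zpow_one]; exact h1.symm.trans h2
  have hdvd : (p : ℤ) ∣ (k - 1) * (k + 1) := by
    have h3 := (zpow_eq_zpow_iff_modEq.mp hkk)
    rw [hbord] at h3
    have h4 := Int.ModEq.dvd h3
    have h5 : (k - 1) * (k + 1) = -(1 - k * k) := by ring
    rw [h5]
    exact Int.dvd_neg.mpr h4
  have hprime : Prime (p : ℤ) := Nat.prime_iff_prime_int.mp hp.out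
  have hrel : a * b * a⁻¹ = b⁻¹ := by
    rcases hprime.dvd_mul.mp hdvd with hd | hd
    · exfalso
      have : b ^ k = b ^ (1:ℤ) := by
        apply zpow_eq_zpow_iff_modEq.mpr
        rw [hbord]
        exact Int.ModEq.symm ((Int.modEq_iff_dvd).mpr (by simpa using hd))
      rw [this, zpow_one] at hk
      apply hba
      calc b * a = (a * b * a⁻¹) * a := by rw [← hk]
      _ = a * b := by group
    · have : b ^ k = b ^ (-1:ℤ) := by
        apply zpow_eq_zpow_iff_modEq.mpr
        rw [hbord]
        exact Int.ModEq.symm ((Int.modEq_iff_dvd).mpr (by simpa using hd))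
      rw [this, zpow_neg_one] at hk
      exact hk.symm
  have hconj : ∀ m : ℤ, a * b ^ m * a⁻¹ = b ^ (-m) := by
    intro m
    calc a * b ^ m * a⁻¹ = (a * b * a⁻¹) ^ m := conj_zpow.symm
    _ = (b⁻¹) ^ m := by rw [hrel]
    _ = b ^ (-m) := by rw [inv_zpow']
  have hswap : ∀ m : ℤ, b ^ m * a = a * b ^ (-m) := by
    intro m
    have h := hconj (-m)
    rw [neg_neg] at h
    calc b ^ m * a = (a * b ^ (-m) * a⁻¹) * a := by rw [h]
    _ = a * b ^ (-m) := by group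
  have hcastval : ∀ x : ZMod p, ((x.val : ℤ) : ZMod p) = x := by
    intro x
    have h := ZMod.natCast_rightInverse (n := p) x
    exact_mod_cast h
  have hψ : ∀ (m : ℤ) (x : ZMod p), ((m : ZMod p) = x) → b ^ m = b ^ (x.val : ℤ) := by
    intro m x h
    apply zpow_eq_zpow_iff_modEq.mpr
    rw [hbord]
    rw [← hcastval x] at h
    exact (ZMod.intCast_eq_intCast_iff _ _ _).mp h
  have hbcomm : ∀ m : ℤ, a ≠ b ^ m := by
    intro m hm
    apply hba
    rw [hm, ← zpow_one_add, ← zpow_add_one]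
    ring_nf
  have hrinj : ∀ i j : ZMod p, b ^ (i.val : ℤ) = b ^ (j.val : ℤ) → i = j := by
    intro i j h
    have h2 := zpow_eq_zpow_iff_modEq.mp h
    rw [hbord] at h2
    have h3 := (ZMod.intCast_eq_intCast_iff _ _ _).mpr h2
    rwa [hcastval, hcastval] at h3
  let f : DihedralGroup p → G := fun d => match d with
    | DihedralGroup.r i => b ^ (i.val : ℤ)
    | DihedralGroup.sr i => a * b ^ (i.val : ℤ)
  have hmul : ∀ x y, f (x * y) = f x * f y := by
    rintro (i | i) (j | j)
    · show b ^ (((i + j) : ZMod p).val : ℤ) = b ^ (i.val : ℤ) * b ^ (j.val : ℤ)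
      rw [← zpow_add]
      exact (hψ _ _ (by push_cast [hcastval]; ring)).symm
    · show a * b ^ (((j - i) : ZMod p).val : ℤ) = b ^ (i.val : ℤ) * (a * b ^ (j.val : ℤ))
      rw [← mul_assoc, hswap, mul_assoc, ← zpow_add]
      congr 1
      exact (hψ _ _ (by push_cast [hcastval]; ring)).symm
    · show a * b ^ (((i + j) : ZMod p).val : ℤ) = (a * b ^ (i.val : ℤ)) * b ^ (j.val : ℤ)
      rw [mul_assoc, ← zpow_add]
      congr 1
      exact (hψ _ _ (by push_cast [hcastval]; ring)).symm
    · show b ^ (((j - i) : ZMod p).val : ℤ) = (a * b ^ (i.val : ℤ)) * (a * b ^ (j.val : ℤ))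
      calc b ^ (((j - i) : ZMod p).val : ℤ)
          = b ^ ((-(i.val : ℤ)) + (j.val : ℤ)) :=
            (hψ _ _ (by push_cast [hcastval]; ring)).symm
        _ = (a * a) * (b ^ (-(i.val : ℤ)) * b ^ ((j.val : ℤ))) := by rw [haa]; group
        _ = (a * b ^ (i.val : ℤ)) * (a * b ^ (j.val : ℤ)) := by
            rw [mul_assoc a a _, ← mul_assoc a (b ^ (-(i.val:ℤ))) _, ← hswap]
            group
  let F : DihedralGroup p →* G := MonoidHom.mk' f hmul
  have hinj : Function.Injective F := by
    rintro (i | i) (j | j) h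
    · have h' : b ^ (i.val : ℤ) = b ^ (j.val : ℤ) := h
      rw [hrinj _ _ h']
    · exfalso
      have h' : b ^ (i.val : ℤ) = a * b ^ (j.val : ℤ) := h
      have : a = b ^ ((i.val : ℤ) - (j.val : ℤ)) := by
        rw [zpow_sub, h']; group
      exact hbcomm _ this
    · exfalso
      have h' : a * b ^ (i.val : ℤ) = b ^ (j.val : ℤ) := h
      have : a = b ^ ((j.val : ℤ) - (i.val : ℤ)) := by
        rw [zpow_sub, ← h']; group
      exact hbcomm _ this
    · have h' : a * b ^ (i.val : ℤ) = a * b ^ (j.val : ℤ) := h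
      rw [hrinj _ _ (mul_left_cancel h')]
  have hbij : Function.Bijective F :=
    (Fintype.bijective_iff_injective_and_card F).mpr
      ⟨hinj, by rw [DihedralGroup.card, hcard]⟩
  exact ⟨(MulEquiv.ofBijective F hbij).symm⟩

lemma one_mem_relCenter {G : Type*} [Group G] (H : Subgroup G) : (1:G) ∈ relCenter G H :=
  ⟨H.one_mem, fun y => by rw [one_mul, mul_one]⟩

lemma reverse_dir {G : Type*} [Group G] (H : Subgroup G) (p : ℕ)
    (e : G ≃* DihedralGroup p) (hH2 : Nat.card H = 2)
    (hd : ∀ y : DihedralGroup p, y * y = 1 → y ≠ 1 → ∀ z, z * y = y * z → z = 1 ∨ z = y)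
    (hne : ∃ u v w : DihedralGroup p, u ≠ v ∧ u ≠ w ∧ v ≠ w ∧ u ≠ 1 ∧ v ≠ 1 ∧ w ≠ 1) :
    (gnc G H 1).IsTree := by
  -- extract the involution a of H
  obtain ⟨y, hy, hyu⟩ := (Nat.card_eq_two_iff' (⟨1, H.one_mem⟩ : H)).mp hH2
  set a : G := (y : G) with ha
  have haH : a ∈ H := y.2
  have ha1 : a ≠ 1 := fun h => hy (Subtype.ext h)
  have hmem : ∀ x ∈ H, x = 1 ∨ x = a := by
    intro x hx
    by_cases h : x = 1
    · exact Or.inl h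
    · exact Or.inr (congrArg Subtype.val (hyu ⟨x, hx⟩ (fun hh => h (congrArg Subtype.val hh))))
  have haa : a * a = 1 := by
    rcases hmem (a * a) (H.mul_mem haH haH) with h | h
    · exact h
    · exact absurd (mul_left_cancel (show a * a = a * 1 by rwa [mul_one])) ha1
  have hea2 : e a * e a = 1 := by rw [← map_mul, haa, map_one]
  have hea1 : e a ≠ 1 := fun h => ha1 (by
    have := congrArg e.symm h
    simpa using this)
  have hCa : ∀ x : G, x * a = a * x → x = 1 ∨ x = a := by
    intro x hx
    rcases hd (e a) hea2 hea1 (e x) (by rw [← map_mul, ← map_mul, hx]) with h | h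
    · left; have := congrArg e.symm h; simpa using this
    · right; exact e.injective h
  -- a witness not commuting with a
  have hwit : ∃ w : G, a * w ≠ w * a := by
    by_contra hc
    push_neg at hc
    obtain ⟨u, v, w, huv, huw, hvw, hu1, hv1, hw1⟩ := hne
    have key : ∀ d : DihedralGroup p, d ≠ 1 → d = e a := by
      intro d hd1
      rcases hCa (e.symm d) (hc (e.symm d)).symm with h | h
      · exact absurd (by simpa using congrArg e h) hd1
      · simpa using congrArg e h
    exact huv ((key u hu1).trans (key v hv1).symm)
  obtain ⟨w₀, hw₀⟩ := hwit
  have haZ : a ∈ (relCenter G H)ᶜ := by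
    intro h
    exact hw₀ (h.2 w₀)
  set va : ((relCenter G H)ᶜ : Set G) := ⟨a, haZ⟩ with hva
  apply star_isTree va
  · rintro x z ⟨hne', hmemxy, h1, -⟩
    rcases hmemxy with hx | hz
    · left
      rcases hmem _ hx with h | h
      · exact absurd (h ▸ one_mem_relCenter H) x.2
      · exact Subtype.ext h
    · right
      rcases hmem _ hz with h | h
      · exact absurd (h ▸ one_mem_relCenter H) z.2
      · exact Subtype.ext h
  · intro v hv
    have hvne : (v : G) ≠ a := fun h => hv (Subtype.ext h)
    have hnc : comm' a (v : G) ≠ 1 := by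
      rw [ne_eq, comm'_eq_one_iff]
      intro h
      rcases hCa (v : G) h.symm with h1 | h1
      · exact v.2 (h1 ▸ one_mem_relCenter H)
      · exact hvne h1
    exact ⟨fun h => hv h.symm, Or.inl haH, hnc,
      by rwa [inv_one]⟩

lemma forward_dir {G : Type*} [Group G] [Fintype G]
    (hcard : Nat.card G ≤ 12)
    (H : Subgroup G) (hH : (H : Set G) ≠ relCenter G H)
    (hT : (gnc G H 1).IsTree) :
    Nat.card H = 2 ∧
      (Nonempty (G ≃* DihedralGroup 3) ∨ Nonempty (G ≃* DihedralGroup 5)) := by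
  classical
  have hac := hT.IsAcyclic
  have hconn := hT.isConnected
  have hvert : ∀ x : G, (∃ w, x * w ≠ w * x) → x ∈ (relCenter G H)ᶜ := by
    rintro x ⟨w, hw⟩ hx
    exact hw (hx.2 w)
  have hadj : ∀ (x y : ((relCenter G H)ᶜ : Set G)), ((x:G) ∈ H ∨ (y:G) ∈ H) →
      (x:G) * (y:G) ≠ (y:G) * (x:G) → (gnc G H 1).Adj x y := by
    intro x y hm hne
    refine ⟨?_, hm, ?_, ?_⟩
    · intro h; exact hne (by rw [h])
    · rw [ne_eq, comm'_eq_one_iff]; exact hne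
    · rw [inv_one, ne_eq, comm'_eq_one_iff]; exact hne
  have hex : ∃ a ∈ H, a ∉ relCenter G H := by
    by_contra hc
    push_neg at hc
    apply hH
    ext x
    exact ⟨fun h => hc x h, fun h => h.1⟩
  obtain ⟨a, haH, haZ⟩ := hex
  have hanc : ∃ w, a * w ≠ w * a := by
    by_contra hc; push_neg at hc; exact haZ ⟨haH, hc⟩
  obtain ⟨y₀, hy₀⟩ := hanc
  set va : ((relCenter G H)ᶜ : Set G) := ⟨a, hvert a ⟨y₀, hy₀⟩⟩ with hvadef
  have ha1 : a ≠ 1 := fun h => hy₀ (by rw [h, one_mul, mul_one])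
  -- Step 1 : H is commutative
  have hHcomm : ∀ x ∈ H, ∀ z ∈ H, x * z = z * x := by
    intro x hx z hz
    by_contra hxz
    obtain ⟨w, hw1, hw2⟩ := exists_not_commute hxz
    set vx : ((relCenter G H)ᶜ : Set G) := ⟨x, hvert x ⟨z, hxz⟩⟩
    set vz : ((relCenter G H)ᶜ : Set G) := ⟨z, hvert z ⟨x, fun h => hxz h.symm⟩⟩
    set vw : ((relCenter G H)ᶜ : Set G) := ⟨w, hvert w ⟨x, fun h => hw1 h.symm⟩⟩
    exact no_triangle hac
      (hadj vx vz (Or.inl hx) hxz)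
      (hadj vx vw (Or.inl hx) hw1)
      (hadj vw vz (Or.inr hz) (fun h => hw2 h.symm))
  -- Step 2 : a is the unique noncentral element of H
  have huniq : ∀ x ∈ H, (∃ w, x * w ≠ w * x) → x = a := by
    intro x hx hxnc
    by_contra hxa
    obtain ⟨w, hw⟩ := hxnc
    obtain ⟨z, hz1, hz2⟩ := exists_not_commute₂ ⟨y₀, hy₀⟩ ⟨w, hw⟩
    have hzaz : z ≠ a * z := by
      intro h
      apply ha1
      have h2 : a * z = 1 * z := by rw [← h, one_mul]
      exact mul_right_cancel h2
    have haz1 : a * (a * z) ≠ (a * z) * a := by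
      intro h
      apply hz1
      have h2 : a * (a * z) = a * (z * a) := by rw [h, mul_assoc]
      exact mul_left_cancel h2
    have hax : x * a = a * x := hHcomm x hx a haH
    have haz2 : x * (a * z) ≠ (a * z) * x := by
      intro h
      apply hz2
      have h2 : a * (x * z) = a * (z * x) := by
        calc a * (x * z) = (a * x) * z := by rw [mul_assoc]
        _ = (x * a) * z := by rw [hax]
        _ = x * (a * z) := by rw [mul_assoc]
        _ = (a * z) * x := h
        _ = a * (z * x) := by rw [mul_assoc]
      exact mul_left_cancel h2
    set vx : ((relCenter G H)ᶜ : Set G) := ⟨x, hvert x ⟨w, hw⟩⟩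
    set vz : ((relCenter G H)ᶜ : Set G) := ⟨z, hvert z ⟨a, fun h => hz1 h.symm⟩⟩
    set vaz : ((relCenter G H)ᶜ : Set G) := ⟨a * z, hvert (a*z) ⟨a, fun h => haz1 h.symm⟩⟩
    exact no_square hac
      (show vz ≠ vaz from fun h => hzaz (congrArg Subtype.val h))
      (show va ≠ vx from fun h => hxa (congrArg Subtype.val h).symm)
      (hadj va vz (Or.inl haH) hz1)
      (hadj vz vx (Or.inr hx) (fun h => hz2 h.symm))
      (hadj va vaz (Or.inl haH) haz1)
      (hadj vaz vx (Or.inr hx) (fun h => haz2 h.symm))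
  -- vertices have neighbours
  have hreach : ∀ (x : G) (hx : x ∈ (relCenter G H)ᶜ),
      (⟨x, hx⟩ : ((relCenter G H)ᶜ : Set G)) ≠ va →
      ∃ u : ((relCenter G H)ᶜ : Set G), (gnc G H 1).Adj ⟨x, hx⟩ u := by
    intro x hx hne
    obtain ⟨wlk⟩ := hconn.preconnected ⟨x, hx⟩ va
    have hnn : ¬ wlk.Nil := Walk.not_nil_of_ne hne
    obtain ⟨u, hadj', -⟩ := Walk.not_nil_iff.mp hnn
    exact ⟨u, hadj'⟩
  -- Step 4 : centralizer of a
  have hC' : ∀ x : G, x * a = a * x → (∀ w, x * w = w * x) ∨ x = a := by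
    intro x hxa
    by_contra hc
    push_neg at hc
    obtain ⟨hxnc, hxa'⟩ := hc
    have hxH : x ∉ H := fun hxh => hxa' (huniq x hxh hxnc)
    obtain ⟨u, hu⟩ := hreach x (hvert x hxnc)
      (fun h => hxa' (congrArg Subtype.val h))
    obtain ⟨hne', hm, h1, -⟩ := hu
    have huH : (u : G) ∈ H := hm.resolve_left hxH
    have hxu : x * (u : G) ≠ (u : G) * x := fun h => h1 ((comm'_eq_one_iff _ _).mpr h)
    have hua : (u : G) = a := huniq u huH ⟨x, fun h => hxu h.symm⟩
    rw [hua] at hxu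
    exact hxu hxa
  -- Z(G) = 1
  have hZ1 : ∀ z : G, (∀ w, z * w = w * z) → z = 1 := by
    intro z hz
    have hcom : (z * a) * a = a * (z * a) := by rw [← mul_assoc, ← hz a]
    rcases hC' (z * a) hcom with h | h
    · exfalso
      apply hy₀
      have h5 : z * (a * y₀) = z * (y₀ * a) := by
        calc z * (a * y₀) = (z * a) * y₀ := by rw [mul_assoc]
        _ = y₀ * (z * a) := h y₀
        _ = (y₀ * z) * a := by rw [mul_assoc]
        _ = (z * y₀) * a := by rw [← hz y₀]
        _ = z * (y₀ * a) := by rw [mul_assoc]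
      exact mul_left_cancel h5
    · have h2 : z * a = 1 * a := by rw [h, one_mul]
      exact mul_right_cancel h2
  have hCa : ∀ x : G, x * a = a * x → x = 1 ∨ x = a := fun x h =>
    (hC' x h).elim (fun hc => Or.inl (hZ1 x hc)) Or.inr
  have haa : a * a = 1 := by
    rcases hCa (a * a) (by rw [mul_assoc]) with h | h
    · exact h
    · exact absurd (mul_left_cancel (show a * a = a * 1 by rwa [mul_one])) ha1
  -- |H| = 2
  have hH2 : Nat.card H = 2 := by
    rw [Nat.card_eq_two_iff]
    refine ⟨⟨1, H.one_mem⟩, ⟨a, haH⟩, fun h => ha1 (congrArg Subtype.val h).symm, ?_⟩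
    ext ⟨x, hx⟩
    simp only [Set.mem_insert_iff, Set.mem_singleton_iff, Set.mem_univ, iff_true]
    by_cases hc : ∀ w, x * w = w * x
    · left; exact Subtype.ext (hZ1 x hc)
    · push_neg at hc
      right; exact Subtype.ext (huniq x hx hc)
  -- Sylow argument : 4 does not divide |G|
  haveI : Fact (Nat.Prime 2) := ⟨Nat.prime_two⟩
  have hord : orderOf a = 2 := orderOf_eq_prime (by rw [pow_two]; exact haa) ha1
  have h2dvd : 2 ∣ Fintype.card G := hord ▸ orderOf_dvd_card
  have hpg : IsPGroup 2 (Subgroup.zpowers a) := IsPGroup.of_card (by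
    rw [Nat.card_zpowers, hord, pow_one])
  obtain ⟨Q, hQ⟩ := hpg.exists_le_sylow
  have haQ : a ∈ (Q : Subgroup G) := hQ (Subgroup.mem_zpowers a)
  haveI : Nontrivial (Q : Subgroup G) :=
    ⟨⟨⟨a, haQ⟩, 1, fun h => ha1 (congrArg Subtype.val h)⟩⟩
  haveI hcnt := Q.isPGroup'.center_nontrivial
  obtain ⟨z, hzne⟩ := exists_ne (1 : Subgroup.center (Q : Subgroup G))
  have hzcomm : ∀ x : (Q : Subgroup G), (x : G) * ((z : (Q : Subgroup G)) : G)
      = ((z : (Q : Subgroup G)) : G) * (x : G) := by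
    intro x
    have h := (Subgroup.mem_center_iff.mp z.2) x
    exact congrArg Subtype.val h
  have hzz1 : ((z : (Q : Subgroup G)) : G) ≠ 1 :=
    fun h => hzne (Subtype.ext (Subtype.ext h))
  have hzza : ((z : (Q : Subgroup G)) : G) = a := by
    rcases hCa _ (hzcomm ⟨a, haQ⟩).symm with h | h
    · exact absurd h hzz1
    · exact h
  have hQsub : ∀ x : (Q : Subgroup G), (x : G) = 1 ∨ (x : G) = a := by
    intro x
    apply hCa
    rw [← hzza]
    exact hzcomm x
  have hQeq : (Q : Subgroup G) = Subgroup.zpowers a := by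
    apply le_antisymm
    · intro x hx
      rcases hQsub ⟨x, hx⟩ with h | h
      · simp only at h; rw [h]; exact Subgroup.one_mem _
      · simp only at h; rw [h]; exact Subgroup.mem_zpowers a
    · exact hQ
  have hcardQ : Nat.card (Q : Subgroup G) = 2 := by
    rw [hQeq, Nat.card_zpowers, hord]
  have hfact : (Nat.card G).factorization 2 = 1 := by
    have hmlt := Q.card_eq_multiplicity
    rw [hcardQ] at hmlt
    have h21 : (2:ℕ) ^ 1 = 2 ^ (Nat.card G).factorization 2 := by
      rw [pow_one]; exact hmlt
    exact (Nat.pow_right_injective (le_refl 2) h21).symm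
  have h4 : ¬ (4 ∣ Nat.card G) := by
    intro h4d
    have h22 : 2 ^ 2 ∣ Nat.card G := by
      have h42 : (4:ℕ) = 2 ^ 2 := by norm_num
      rwa [h42] at h4d
    have := (Nat.Prime.pow_dvd_iff_le_factorization Nat.prime_two
      Nat.card_pos.ne').mp h22
    omega
  have h3 : 3 ≤ Nat.card G := by
    have hy1 : y₀ ≠ 1 := fun h => hy₀ (by rw [h, one_mul, mul_one])
    have hya : y₀ ≠ a := fun h => hy₀ (by rw [h])
    have hsub : ({1, a, y₀} : Finset G).card = 3 := by
      rw [Finset.card_insert_of_notMem (by simp [Ne.symm ha1, Ne.symm hy1]),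
        Finset.card_insert_of_notMem (by simp [Ne.symm hya]), Finset.card_singleton]
    rw [Nat.card_eq_fintype_card]
    calc 3 = ({1, a, y₀} : Finset G).card := hsub.symm
    _ ≤ Fintype.card G := Finset.card_le_univ _
  have h2dvd' : 2 ∣ Nat.card G := by rw [Nat.card_eq_fintype_card]; exact h2dvd
  have hn : Nat.card G = 6 ∨ Nat.card G = 10 := by omega
  refine ⟨hH2, ?_⟩
  rcases hn with h | h
  · left
    haveI : Fact (Nat.Prime 3) := ⟨by norm_num⟩
    exact main_iso 3 (by norm_num) (by rw [← Nat.card_eq_fintype_card, h]) a ha1 haa hCa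
  · right
    haveI : Fact (Nat.Prime 5) := ⟨by norm_num⟩
    exact main_iso 5 (by norm_num) (by rw [← Nat.card_eq_fintype_card, h]) a ha1 haa hCa

/-- for `|G| ≤ 12` and `g = 1`, `Δ_{H,G}^1` is a tree iff `|H| = 2` and
`G ≅ D₆` or `G ≅ D₁₀`. -/
theorem stmt7 {G : Type*} [Group G] [Fintype G]
    (hna : ∃ x y : G, x * y ≠ y * x) (hcard : Nat.card G ≤ 12)
    (H : Subgroup G) (hH : (H : Set G) ≠ relCenter G H) :
    (gnc G H 1).IsTree ↔
      Nat.card H = 2 ∧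
        (Nonempty (G ≃* DihedralGroup 3) ∨ Nonempty (G ≃* DihedralGroup 5)) := by
  constructor
  · exact fun hT => forward_dir hcard H hH hT
  · rintro ⟨hH2, h | h⟩
    · obtain ⟨e⟩ := h
      exact reverse_dir H 3 e hH2 (by decide) (by decide)
    · obtain ⟨e⟩ := h
      exact reverse_dir H 5 e hH2 (by decide) (by decide)
end
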